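/- Let K ∈ ℝ^{N×N} be symmetric and let M₀, M₁ ∈ ℝ^{n×n}. Then the set of complex eigenvalues of I_N⊗M₀ + K⊗M₁ equals the union, over all eigenvalues γ of K, of the sets of complex eigenvalues of M₀ + γM₁; that is, σ(I_N⊗M₀ + K⊗M₁) = ⋃_{γ ∈ σ(K)} σ(M₀ + γM₁). -/

import Mathlib

open Matrix
open scoped Kronecker

private lemma mem_spectrum_iff_det {m F : Type*} [Fintype m] [DecidableEq m] [Field F]
    (A : Matrix m m F) (x : F) :
    x ∈ spectrum F A ↔ (algebraMap F (Matrix m m F) x - A).det = 0 := by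
  rw [spectrum.mem_iff, Matrix.isUnit_iff_isUnit_det, isUnit_iff_ne_zero, not_not]

private lemma spectrum_blockDiagonal {m o F : Type*} [Fintype m] [DecidableEq m]
    [Fintype o] [DecidableEq o] [Field F] (f : o → Matrix m m F) :
    spectrum F (blockDiagonal f) = ⋃ i, spectrum F (f i) := by
  ext x
  simp only [Set.mem_iUnion, mem_spectrum_iff_det]
  have : algebraMap F (Matrix (m × o) (m × o) F) x - blockDiagonal f
      = blockDiagonal (fun i => algebraMap F (Matrix m m F) x - f i) := by
    ext ⟨a, i⟩ ⟨b, j⟩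
    by_cases h : i = j <;>
      simp [blockDiagonal_apply, Matrix.algebraMap_matrix_apply, h, Prod.ext_iff]
  rw [this, det_blockDiagonal, Finset.prod_eq_zero_iff]
  simp

/-- For a symmetric real matrix `K` and real matrices `M₀, M₁`, the set of complex
eigenvalues of `I_N ⊗ M₀ + K ⊗ M₁` is the union over the eigenvalues `γ` of `K` of the sets
of complex eigenvalues of `M₀ + γM₁`. -/
theorem stmt_8 {n N : ℕ}
    (K : Matrix (Fin N) (Fin N) ℝ) (hK : K.IsSymm)
    (M₀ M₁ : Matrix (Fin n) (Fin n) ℝ) :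
    spectrum ℂ (((1 : Matrix (Fin N) (Fin N) ℝ) ⊗ₖ M₀ + K ⊗ₖ M₁).map Complex.ofReal)
      = ⋃ γ ∈ spectrum ℝ K, spectrum ℂ ((M₀ + γ • M₁).map Complex.ofReal) := by
  have hA : K.IsHermitian := by
    rwa [Matrix.IsHermitian, conjTranspose_eq_transpose_of_trivial]
  set e : Fin N → ℝ := hA.eigenvalues with he
  set V : Matrix (Fin N) (Fin N) ℝ := (hA.eigenvectorUnitary : Matrix (Fin N) (Fin N) ℝ) with hV
  have hVW : V * star V = 1 := (Matrix.mem_unitaryGroup_iff).mp hA.eigenvectorUnitary.2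
  have hWV : star V * V = 1 := (Matrix.mem_unitaryGroup_iff').mp hA.eigenvectorUnitary.2
  have hspec : K = V * Matrix.diagonal e * star V := by
    have := hA.spectral_theorem
    simpa using this
  -- the complexified matrices
  set f : ℝ →+* ℂ := Complex.ofRealHom with hf
  set Kc := K.map f with hKc
  set M₀c := M₀.map f with hM₀c
  set M₁c := M₁.map f with hM₁c
  set Vc := V.map f with hVc
  set Wc := (star V).map f with hWc
  set D : Matrix (Fin N) (Fin N) ℂ := Matrix.diagonal (fun i => (e i : ℂ)) with hD
  have hVcWc : Vc * Wc = 1 := by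
    rw [hVc, hWc, ← Matrix.map_mul, hVW, Matrix.map_one f f.map_zero f.map_one]
  have hWcVc : Wc * Vc = 1 := by
    rw [hVc, hWc, ← Matrix.map_mul, hWV, Matrix.map_one f f.map_zero f.map_one]
  have hKcD : Kc = Vc * D * Wc := by
    rw [hKc, hspec, Matrix.map_mul, Matrix.map_mul, Matrix.diagonal_map f.map_zero]
    rfl
  -- rewrite LHS matrix
  have hLHS : ((1 : Matrix (Fin N) (Fin N) ℝ) ⊗ₖ M₀ + K ⊗ₖ M₁).map Complex.ofReal
      = (1 : Matrix (Fin N) (Fin N) ℂ) ⊗ₖ M₀c + Kc ⊗ₖ M₁c := by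
    ext ⟨i, a⟩ ⟨j, b⟩
    by_cases h : i = j <;>
      simp [Matrix.kroneckerMap_apply, Matrix.one_apply, h, hKc, hM₀c, hM₁c,
        Complex.ofRealHom_eq_coe, hf]
  rw [hLHS]
  -- conjugation by the unit Vc ⊗ₖ 1
  have hconj : (1 : Matrix (Fin N) (Fin N) ℂ) ⊗ₖ M₀c + Kc ⊗ₖ M₁c
      = (Vc ⊗ₖ 1) * ((1 : Matrix (Fin N) (Fin N) ℂ) ⊗ₖ M₀c + D ⊗ₖ M₁c) * (Wc ⊗ₖ 1) := by
    rw [mul_add, add_mul, ← Matrix.mul_kronecker_mul, ← Matrix.mul_kronecker_mul,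
      ← Matrix.mul_kronecker_mul, ← Matrix.mul_kronecker_mul]
    simp only [mul_one, one_mul]
    rw [hVcWc, ← hKcD]
  set u : (Matrix (Fin N × Fin n) (Fin N × Fin n) ℂ)ˣ :=
    ⟨Vc ⊗ₖ 1, Wc ⊗ₖ 1,
      by rw [← Matrix.mul_kronecker_mul, hVcWc, one_mul, Matrix.one_kronecker_one],
      by rw [← Matrix.mul_kronecker_mul, hWcVc, one_mul, Matrix.one_kronecker_one]⟩ with hu
  have hconj' : spectrum ℂ ((1 : Matrix (Fin N) (Fin N) ℂ) ⊗ₖ M₀c + Kc ⊗ₖ M₁c)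
      = spectrum ℂ ((1 : Matrix (Fin N) (Fin N) ℂ) ⊗ₖ M₀c + D ⊗ₖ M₁c) := by
    rw [hconj]
    exact spectrum.units_conjugate (u := u)
  rw [hconj, ← hconj, hconj']
  -- identify with a block diagonal matrix
  set g : Fin N → Matrix (Fin n) (Fin n) ℂ := fun i => M₀c + (e i : ℂ) • M₁c with hg
  have hblock : (1 : Matrix (Fin N) (Fin N) ℂ) ⊗ₖ M₀c + D ⊗ₖ M₁c
      = (Matrix.reindexAlgEquiv (R := ℂ) (A := ℂ) (Equiv.prodComm (Fin n) (Fin N))) (blockDiagonal g) := by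
    ext ⟨i, a⟩ ⟨j, b⟩
    by_cases h : i = j <;>
      simp [Matrix.kroneckerMap_apply, Matrix.one_apply, Matrix.diagonal_apply, h,
        Matrix.reindexAlgEquiv_apply, Matrix.reindex_apply, Matrix.submatrix_apply,
        blockDiagonal_apply, hg, hD]
  rw [hblock, AlgEquiv.spectrum_eq, spectrum_blockDiagonal]
  -- rewrite RHS
  rw [Matrix.IsHermitian.spectrum_real_eq_range_eigenvalues hA, Set.biUnion_range]
  refine Set.iUnion_congr fun i => ?_
  have hgi : g i = (M₀ + hA.eigenvalues i • M₁).map Complex.ofReal := by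
    ext a b
    simp [hg, hM₀c, hM₁c, hf, he, Matrix.map_apply, Complex.ofRealHom_eq_coe]
  rw [hgi]
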